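/- The Fubini equation holds when one of the valuations is simple: for dcpo's D and E, a Scott-open U ⊆ D × E, a simple valuation ν = Σᵢ rᵢ δ_{xᵢ} on D and any subprobability valuation ξ on E, ∫_{x∈D} ∫_{y∈E} χ_U(x,y) dξ dν = ∫_{y∈E} ∫_{x∈D} χ_U(x,y) dν dξ, and both sides equal Σᵢ rᵢ ∫_{y∈E} χ_U(xᵢ,y) dξ. -/
import Mathlib


/-- A set is Scott-open if it is an upper set inaccessible by suprema of
directed sets. -/
def ScottOpen {α : Type*} [Preorder α] (U : Set α) : Prop :=
  (∀ ⦃a b : α⦄, a ≤ b → a ∈ U → b ∈ U) ∧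
  ∀ d : Set α, d.Nonempty → DirectedOn (· ≤ ·) d → ∀ x : α, IsLUB d x → x ∈ U →
    (d ∩ U).Nonempty

/-- A preorder is a dcpo when every nonempty directed subset has a least upper
bound. -/
def IsDcpo (α : Type*) [Preorder α] : Prop :=
  ∀ d : Set α, d.Nonempty → DirectedOn (· ≤ ·) d → ∃ x : α, IsLUB d x

/-- A subprobability valuation on a dcpo (with its Scott topology): a
`[0,1]`-valued, strict, monotone, Scott-continuous, modular function on
Scott-open sets. -/
structure SVal (α : Type*) [Preorder α] where
  v : Set α → ℝ
  nonneg : ∀ U : Set α, ScottOpen U → 0 ≤ v U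
  le_one : ∀ U : Set α, ScottOpen U → v U ≤ 1
  strict : v ∅ = 0
  mono : ∀ ⦃U V : Set α⦄, ScottOpen U → ScottOpen V → U ⊆ V → v U ≤ v V
  cont : ∀ D : Set (Set α), (∀ U ∈ D, ScottOpen U) → D.Nonempty →
    DirectedOn (· ⊆ ·) D → v (⋃₀ D) = sSup (v '' D)
  modular : ∀ U V : Set α, ScottOpen U → ScottOpen V →
    v U + v V = v (U ∪ V) + v (U ∩ V)

/-- The stochastic order on subprobability valuations. -/
instance SVal.instPreorder {α : Type*} [Preorder α] : Preorder (SVal α) where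
  le ν₁ ν₂ := ∀ U : Set α, ScottOpen U → ν₁.v U ≤ ν₂.v U
  le_refl ν := fun _ _ => le_refl _
  le_trans ν₁ ν₂ ν₃ h₁ h₂ := fun U hU => le_trans (h₁ U hU) (h₂ U hU)

/-- The Choquet integral of `f` against the set-function `νv`:
`∫₀¹ νv (f⁻¹(t,∞)) dt`. -/
noncomputable def choquet {α : Type*} (νv : Set α → ℝ) (f : α → ℝ) : ℝ :=
  ∫ t in (0:ℝ)..1, νv (f ⁻¹' Set.Ioi t)

section FubiniAux

open Set MeasureTheory intervalIntegral Classical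

lemma scottOpen_univ {α : Type*} [Preorder α] : ScottOpen (Set.univ : Set α) :=
  ⟨fun _ _ _ _ => trivial, fun d hd _ _ _ _ => by simpa using hd⟩

lemma scottOpen_empty {α : Type*} [Preorder α] : ScottOpen (∅ : Set α) :=
  ⟨fun _ _ _ h => h, fun _ _ _ _ _ h => absurd h (Set.notMem_empty _)⟩

lemma ScottOpen.union {α : Type*} [Preorder α] {U V : Set α}
    (hU : ScottOpen U) (hV : ScottOpen V) : ScottOpen (U ∪ V) := by
  constructor
  · rintro a b hab (h | h)
    · exact Or.inl (hU.1 hab h)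
    · exact Or.inr (hV.1 hab h)
  · rintro d hd hdir x hx (h | h)
    · obtain ⟨u, hud, huU⟩ := hU.2 d hd hdir x hx h
      exact ⟨u, hud, Or.inl huU⟩
    · obtain ⟨u, hud, huU⟩ := hV.2 d hd hdir x hx h
      exact ⟨u, hud, Or.inr huU⟩

lemma ScottOpen.inter {α : Type*} [Preorder α] {U V : Set α}
    (hU : ScottOpen U) (hV : ScottOpen V) : ScottOpen (U ∩ V) := by
  constructor
  · rintro a b hab ⟨h1, h2⟩
    exact ⟨hU.1 hab h1, hV.1 hab h2⟩
  · rintro d hd hdir x hx ⟨h1, h2⟩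
    obtain ⟨u, hud, huU⟩ := hU.2 d hd hdir x hx h1
    obtain ⟨v, hvd, hvV⟩ := hV.2 d hd hdir x hx h2
    obtain ⟨w, hwd, hw1, hw2⟩ := hdir u hud v hvd
    exact ⟨w, hwd, hU.1 hw1 huU, hV.1 hw2 hvV⟩

/-- Slices of Scott-open sets in a product are Scott-open. -/
lemma scottOpen_slice {D E : Type*} [Preorder D] [Preorder E] {U : Set (D × E)}
    (hU : ScottOpen U) (a : D) : ScottOpen {b : E | (a, b) ∈ U} := by
  constructor
  · intro b b' hbb hb
    exact hU.1 (Prod.mk_le_mk.mpr ⟨le_refl a, hbb⟩) hb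
  · intro d hd hdir y hy hyU
    have hdir' : DirectedOn (· ≤ ·) ((fun b => (a, b)) '' d) := by
      rintro _ ⟨u, hu, rfl⟩ _ ⟨v, hv, rfl⟩
      obtain ⟨w, hw, h1, h2⟩ := hdir u hu v hv
      exact ⟨(a, w), ⟨w, hw, rfl⟩, Prod.mk_le_mk.mpr ⟨le_rfl, h1⟩,
        Prod.mk_le_mk.mpr ⟨le_rfl, h2⟩⟩
    have hlub : IsLUB ((fun b => (a, b)) '' d) (a, y) := by
      constructor
      · rintro _ ⟨b, hb, rfl⟩
        exact Prod.mk_le_mk.mpr ⟨le_rfl, hy.1 hb⟩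
      · rintro ⟨c1, c2⟩ hc
        obtain ⟨b0, hb0⟩ := hd
        have h0 := hc ⟨b0, hb0, rfl⟩
        exact Prod.mk_le_mk.mpr ⟨h0.1, hy.2 fun b hb => (hc ⟨b, hb, rfl⟩).2⟩
    obtain ⟨_, ⟨⟨b, hb, rfl⟩, hbU⟩⟩ := hU.2 _ (hd.image _) hdir' (a, y) hlub hyU
    exact ⟨b, hb, hbU⟩

lemma ae_ne_real (c : ℝ) : ∀ᵐ t : ℝ, t ≠ c := by
  have h : {t : ℝ | ¬ t ≠ c} = {c} := by ext t; simp
  rw [MeasureTheory.ae_iff, h]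
  exact Real.volume_singleton

/-- The Choquet integral of a `{0,1}`-valued indicator. -/
lemma choquet_indicator {α : Type*} (μ : Set α → ℝ) (h0 : μ ∅ = 0) (p : α → Prop) :
    choquet μ (fun b => if p b then (1:ℝ) else 0) = μ {b | p b} := by
  rw [choquet]
  have h : ∀ᵐ t : ℝ, t ∈ Set.uIoc (0:ℝ) 1 →
      μ ((fun b => if p b then (1:ℝ) else 0) ⁻¹' Set.Ioi t) = μ {b | p b} := by
    filter_upwards [ae_ne_real 1] with t ht hmem
    rw [Set.uIoc_of_le (by norm_num)] at hmem
    have hpre : ((fun b => if p b then (1:ℝ) else 0) ⁻¹' Set.Ioi t) = {b | p b} := by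
      ext b
      simp only [Set.mem_preimage, Set.mem_Ioi, Set.mem_setOf_eq]
      by_cases hb : p b
      · simp only [hb, if_true, iff_true]
        exact lt_of_le_of_ne hmem.2 ht
      · simp only [hb, if_false, iff_false]
        exact not_lt_of_ge hmem.1.le
    rw [hpre]
  rw [intervalIntegral.integral_congr_ae h]
  simp

lemma indicator_lt_intervalIntegrable (c v a b : ℝ) (hc : 0 ≤ c) :
    IntervalIntegrable (fun t => c * (if t < v then (1:ℝ) else 0)) volume a b := by
  apply AntitoneOn.intervalIntegrable
  intro s _ t _ hst
  by_cases h1 : t < v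
  · simp [h1, lt_of_le_of_lt hst h1]
  · by_cases h2 : s < v <;> simp [h1, h2] <;> positivity

lemma integral_indicator_lt (c : ℝ) (hc0 : 0 ≤ c) (hc1 : c ≤ 1) :
    (∫ t in (0:ℝ)..1, (if t < c then (1:ℝ) else 0)) = c := by
  have hint : ∀ a b : ℝ, IntervalIntegrable (fun t => if t < c then (1:ℝ) else 0) volume a b := by
    intro a b
    have := indicator_lt_intervalIntegrable 1 c a b zero_le_one
    simpa using this
  rw [← intervalIntegral.integral_add_adjacent_intervals (hint 0 c) (hint c 1)]
  have h1 : (∫ t in (0:ℝ)..c, (if t < c then (1:ℝ) else 0)) = c := by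
    have h : ∀ᵐ t : ℝ, t ∈ Set.uIoc (0:ℝ) c → (if t < c then (1:ℝ) else 0) = 1 := by
      filter_upwards [ae_ne_real c] with t ht hmem
      rw [Set.uIoc_of_le hc0] at hmem
      rw [if_pos (lt_of_le_of_ne hmem.2 ht)]
    rw [intervalIntegral.integral_congr_ae h]
    simp
  have h2 : (∫ t in c..(1:ℝ), (if t < c then (1:ℝ) else 0)) = 0 := by
    have h : Set.EqOn (fun t => if t < c then (1:ℝ) else 0) (fun _ => (0:ℝ))
        (Set.uIcc c 1) := by
      intro t ht
      rw [Set.uIcc_of_le hc1] at ht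
      simp [not_lt_of_ge ht.1]
    rw [intervalIntegral.integral_congr h]
    simp
  rw [h1, h2]; ring

/-- Preimages of `(t, ∞)` under simple functions built from Scott-open sets are
Scott-open. -/
lemma scottOpen_simple_preimage {α : Type*} [Preorder α] :
    ∀ (n : ℕ) (r : Fin n → ℝ), (∀ i, 0 ≤ r i) → ∀ (V : Fin n → Set α),
      (∀ i, ScottOpen (V i)) → ∀ t : ℝ,
    ScottOpen ((fun b => ∑ i, r i * (if b ∈ V i then (1:ℝ) else 0)) ⁻¹' Set.Ioi t) := by
  intro n
  induction n with
  | zero =>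
    intro r hr V hV t
    rcases lt_or_ge t 0 with h | h
    · have : ((fun b : α => ∑ i : Fin 0, r i * (if b ∈ V i then (1:ℝ) else 0)) ⁻¹'
          Set.Ioi t) = Set.univ := by
        ext b; simp [h]
      rw [this]; exact scottOpen_univ
    · have : ((fun b : α => ∑ i : Fin 0, r i * (if b ∈ V i then (1:ℝ) else 0)) ⁻¹'
          Set.Ioi t) = ∅ := by
        ext b; simp [not_lt_of_ge h]
      rw [this]; exact scottOpen_empty
  | succ n ih =>
    intro r hr V hV t
    have hset : ((fun b => ∑ i, r i * (if b ∈ V i then (1:ℝ) else 0)) ⁻¹' Set.Ioi t) =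
        (((fun b => ∑ i : Fin n, r i.castSucc * (if b ∈ V i.castSucc then (1:ℝ) else 0)) ⁻¹'
            Set.Ioi (t - r (Fin.last n))) ∩ V (Fin.last n)) ∪
          ((fun b => ∑ i : Fin n, r i.castSucc * (if b ∈ V i.castSucc then (1:ℝ) else 0)) ⁻¹'
            Set.Ioi t) := by
      ext b
      simp only [Set.mem_preimage, Set.mem_Ioi, Set.mem_union, Set.mem_inter_iff,
        Fin.sum_univ_castSucc]
      by_cases hb : b ∈ V (Fin.last n)
      · simp only [hb, if_true, iff_true, mul_one, and_true]
        constructor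
        · intro h; exact Or.inl (by linarith)
        · rintro (h | h) <;> linarith [hr (Fin.last n)]
      · simp [hb]
    rw [hset]
    exact ((ih (fun i => r i.castSucc) (fun i => hr _) (fun i => V i.castSucc)
        (fun i => hV _) _).inter (hV _)).union
      (ih (fun i => r i.castSucc) (fun i => hr _) (fun i => V i.castSucc) (fun i => hV _) t)

/-- The Choquet integral of a simple function against a modular monotone
set-function is the weighted sum of the measures. -/
lemma choquet_simple {α : Type*} [Preorder α] (μ : Set α → ℝ) (h0 : μ ∅ = 0)
    (hmono : ∀ ⦃U V : Set α⦄, ScottOpen U → ScottOpen V → U ⊆ V → μ U ≤ μ V)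
    (hmod : ∀ U V : Set α, ScottOpen U → ScottOpen V → μ U + μ V = μ (U ∪ V) + μ (U ∩ V)) :
    ∀ (n : ℕ) (r : Fin n → ℝ), (∀ i, 0 ≤ r i) → (∑ i, r i) ≤ 1 →
      ∀ (V : Fin n → Set α), (∀ i, ScottOpen (V i)) →
    choquet μ (fun b => ∑ i, r i * (if b ∈ V i then (1:ℝ) else 0)) = ∑ i, r i * μ (V i) := by
  intro n
  induction n with
  | zero =>
    intro r hr hsum V hV
    rw [choquet]
    have h : Set.EqOn (fun t => μ ((fun b : α => ∑ i : Fin 0, r i *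
        (if b ∈ V i then (1:ℝ) else 0)) ⁻¹' Set.Ioi t)) (fun _ => (0:ℝ))
        (Set.uIcc (0:ℝ) 1) := by
      intro t ht
      rw [Set.uIcc_of_le (by norm_num)] at ht
      have : ((fun b : α => ∑ i : Fin 0, r i * (if b ∈ V i then (1:ℝ) else 0)) ⁻¹'
          Set.Ioi t) = ∅ := by
        ext b; simp [not_lt_of_ge ht.1]
      dsimp only
      rw [this, h0]
    rw [intervalIntegral.integral_congr h]
    simp
  | succ n ih =>
    intro r hr hsum V hV
    set c := r (Fin.last n) with hc_def
    set W := V (Fin.last n) with hW_def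
    set g : α → ℝ := fun b => ∑ i : Fin n, r i.castSucc * (if b ∈ V i.castSucc then (1:ℝ) else 0)
      with hg_def
    have hc : 0 ≤ c := hr _
    have hW : ScottOpen W := hV _
    have hsum' : (∑ i : Fin n, r i.castSucc) + c = ∑ i, r i := (Fin.sum_univ_castSucc r).symm
    have hg0 : ∀ b, 0 ≤ g b := by
      intro b
      apply Finset.sum_nonneg
      intro i _
      have := hr i.castSucc
      positivity
    have hgle : ∀ b, g b ≤ 1 - c := by
      intro b
      have h1 : g b ≤ ∑ i : Fin n, r i.castSucc := by
        apply Finset.sum_le_sum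
        intro i _
        by_cases hb : b ∈ V i.castSucc <;> simp [hb, hr i.castSucc]
      linarith
    have hOp : ∀ t : ℝ, ScottOpen (g ⁻¹' Set.Ioi t) :=
      scottOpen_simple_preimage n (fun i => r i.castSucc) (fun i => hr _)
        (fun i => V i.castSucc) (fun i => hV _)
    have hOph : ∀ t : ℝ, ScottOpen ((fun b => ∑ i, r i * (if b ∈ V i then (1:ℝ) else 0))
        ⁻¹' Set.Ioi t) := scottOpen_simple_preimage (n+1) r hr V hV
    have hpre_anti : ∀ s t : ℝ, s ≤ t → (g ⁻¹' Set.Ioi t) ⊆ (g ⁻¹' Set.Ioi s) :=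
      fun s t hst b hb => lt_of_le_of_lt hst hb
    -- antitone integrands
    have hF1anti : Antitone (fun t => μ (g ⁻¹' Set.Ioi t ∩ W)) := by
      intro s t hst
      exact hmono ((hOp t).inter hW) ((hOp s).inter hW)
        (Set.inter_subset_inter_left _ (hpre_anti s t hst))
    have hF2anti : Antitone (fun t => μ (g ⁻¹' Set.Ioi t ∪ W)) := by
      intro s t hst
      exact hmono ((hOp t).union hW) ((hOp s).union hW)
        (Set.union_subset_union_left _ (hpre_anti s t hst))
    have hFanti : Antitone (fun t => μ (g ⁻¹' Set.Ioi t)) := by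
      intro s t hst
      exact hmono (hOp t) (hOp s) (hpre_anti s t hst)
    have hint1 : ∀ a b : ℝ, IntervalIntegrable (fun t => μ (g ⁻¹' Set.Ioi t ∩ W))
        volume a b := fun a b => (hF1anti.antitoneOn _).intervalIntegrable
    have hint1' : ∀ a b : ℝ, IntervalIntegrable (fun t => μ (g ⁻¹' Set.Ioi (t - c) ∩ W))
        volume a b := by
      intro a b
      apply AntitoneOn.intervalIntegrable
      intro s _ t _ hst
      exact hF1anti (by linarith)
    have hint2 : ∀ a b : ℝ, IntervalIntegrable (fun t => μ (g ⁻¹' Set.Ioi t ∪ W))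
        volume a b := fun a b => (hF2anti.antitoneOn _).intervalIntegrable
    have hint3 : ∀ a b : ℝ, IntervalIntegrable (fun t => μ (g ⁻¹' Set.Ioi t))
        volume a b := fun a b => (hFanti.antitoneOn _).intervalIntegrable
    -- pointwise modular decomposition
    have key : ∀ t : ℝ, μ ((fun b => ∑ i, r i * (if b ∈ V i then (1:ℝ) else 0)) ⁻¹' Set.Ioi t)
        = μ (g ⁻¹' Set.Ioi (t - c) ∩ W) + μ (g ⁻¹' Set.Ioi t ∪ W) - μ W := by
      intro t
      have hs1 : ((fun b => ∑ i, r i * (if b ∈ V i then (1:ℝ) else 0)) ⁻¹' Set.Ioi t) ∩ W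
          = g ⁻¹' Set.Ioi (t - c) ∩ W := by
        ext b
        simp only [Set.mem_inter_iff, Set.mem_preimage, Set.mem_Ioi, hg_def, hW_def, hc_def,
          Fin.sum_univ_castSucc]
        by_cases hb : b ∈ V (Fin.last n)
        · simp only [hb, and_true, if_true, mul_one]
          constructor <;> intro h <;> linarith
        · simp [hb]
      have hs2 : ((fun b => ∑ i, r i * (if b ∈ V i then (1:ℝ) else 0)) ⁻¹' Set.Ioi t) ∪ W
          = g ⁻¹' Set.Ioi t ∪ W := by
        ext b
        simp only [Set.mem_union, Set.mem_preimage, Set.mem_Ioi, hg_def, hW_def, hc_def,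
          Fin.sum_univ_castSucc]
        by_cases hb : b ∈ V (Fin.last n)
        · simp [hb]
        · simp [hb]
      have hm := hmod ((fun b => ∑ i, r i * (if b ∈ V i then (1:ℝ) else 0)) ⁻¹' Set.Ioi t)
        W (hOph t) hW
      rw [hs1, hs2] at hm
      linarith
    rw [choquet]
    rw [intervalIntegral.integral_congr (g := fun t =>
      μ (g ⁻¹' Set.Ioi (t - c) ∩ W) + μ (g ⁻¹' Set.Ioi t ∪ W) - μ W)
      (fun t _ => key t)]
    have hsplit : (∫ t in (0:ℝ)..1,
        (μ (g ⁻¹' Set.Ioi (t - c) ∩ W) + μ (g ⁻¹' Set.Ioi t ∪ W) - μ W))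
        = (∫ t in (0:ℝ)..1, μ (g ⁻¹' Set.Ioi (t - c) ∩ W))
          + (∫ t in (0:ℝ)..1, μ (g ⁻¹' Set.Ioi t ∪ W)) - μ W := by
      rw [intervalIntegral.integral_sub ((hint1' 0 1).add (hint2 0 1))
        intervalIntegrable_const,
        intervalIntegral.integral_add (hint1' 0 1) (hint2 0 1)]
      simp
    rw [hsplit]
    -- compute the shifted integral
    have hA : (∫ t in (0:ℝ)..1, μ (g ⁻¹' Set.Ioi (t - c) ∩ W))
        = c * μ W + ∫ t in (0:ℝ)..1, μ (g ⁻¹' Set.Ioi t ∩ W) := by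
      have hshift : (∫ t in (0:ℝ)..1, μ (g ⁻¹' Set.Ioi (t - c) ∩ W))
          = ∫ t in (0 - c)..(1 - c), μ (g ⁻¹' Set.Ioi t ∩ W) :=
        intervalIntegral.integral_comp_sub_right (fun s => μ (g ⁻¹' Set.Ioi s ∩ W)) c
      have e1 : (∫ t in (0 - c)..(1 - c), μ (g ⁻¹' Set.Ioi t ∩ W))
          = (∫ t in (0 - c)..(0:ℝ), μ (g ⁻¹' Set.Ioi t ∩ W))
            + ∫ t in (0:ℝ)..(1 - c), μ (g ⁻¹' Set.Ioi t ∩ W) :=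
        (intervalIntegral.integral_add_adjacent_intervals (hint1 _ _) (hint1 _ _)).symm
      have e2 : (∫ t in (0 - c)..(0:ℝ), μ (g ⁻¹' Set.Ioi t ∩ W)) = c * μ W := by
        have h : ∀ᵐ t : ℝ, t ∈ Set.uIoc (0 - c) (0:ℝ) →
            μ (g ⁻¹' Set.Ioi t ∩ W) = μ W := by
          filter_upwards [ae_ne_real 0] with t ht hmem
          rw [Set.uIoc_of_le (by linarith)] at hmem
          have ht0 : t < 0 := lt_of_le_of_ne hmem.2 ht
          have huniv : g ⁻¹' Set.Ioi t = Set.univ := by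
            ext b
            simp only [Set.mem_preimage, Set.mem_Ioi, Set.mem_univ, iff_true]
            exact lt_of_lt_of_le ht0 (hg0 b)
          rw [huniv, Set.univ_inter]
        rw [intervalIntegral.integral_congr_ae h, intervalIntegral.integral_const]
        simp [smul_eq_mul]
      have e3 : (∫ t in (0:ℝ)..(1 - c), μ (g ⁻¹' Set.Ioi t ∩ W))
          = (∫ t in (0:ℝ)..1, μ (g ⁻¹' Set.Ioi t ∩ W))
            - ∫ t in (1 - c)..(1:ℝ), μ (g ⁻¹' Set.Ioi t ∩ W) := by
        rw [← intervalIntegral.integral_add_adjacent_intervals (hint1 0 (1 - c))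
          (hint1 (1 - c) 1)]
        ring
      have e4 : (∫ t in (1 - c)..(1:ℝ), μ (g ⁻¹' Set.Ioi t ∩ W)) = 0 := by
        have h : Set.EqOn (fun t => μ (g ⁻¹' Set.Ioi t ∩ W)) (fun _ => (0:ℝ))
            (Set.uIcc (1 - c) 1) := by
          intro t ht
          rw [Set.uIcc_of_le (by linarith)] at ht
          have hemp : g ⁻¹' Set.Ioi t = ∅ := by
            ext b
            simp only [Set.mem_preimage, Set.mem_Ioi, Set.mem_empty_iff_false, iff_false,
              not_lt]
            exact le_trans (hgle b) ht.1
          simp [hemp, h0]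
        rw [intervalIntegral.integral_congr h]
        simp
      rw [hshift, e1, e2, e3, e4]
      ring
    -- the modular recombination
    have hBC : (∫ t in (0:ℝ)..1, μ (g ⁻¹' Set.Ioi t ∩ W))
        + (∫ t in (0:ℝ)..1, μ (g ⁻¹' Set.Ioi t ∪ W))
        = (∫ t in (0:ℝ)..1, μ (g ⁻¹' Set.Ioi t)) + μ W := by
      rw [← intervalIntegral.integral_add (hint1 0 1) (hint2 0 1)]
      have h : Set.EqOn (fun t => μ (g ⁻¹' Set.Ioi t ∩ W) + μ (g ⁻¹' Set.Ioi t ∪ W))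
          (fun t => μ (g ⁻¹' Set.Ioi t) + μ W) (Set.uIcc (0:ℝ) 1) := by
        intro t _
        have := hmod (g ⁻¹' Set.Ioi t) W (hOp t) hW
        dsimp only
        linarith
      rw [intervalIntegral.integral_congr h,
        intervalIntegral.integral_add (hint3 0 1) intervalIntegrable_const]
      simp
    have hih : (∫ t in (0:ℝ)..1, μ (g ⁻¹' Set.Ioi t))
        = ∑ i : Fin n, r i.castSucc * μ (V i.castSucc) := by
      have := ih (fun i => r i.castSucc) (fun i => hr _) (by linarith)
        (fun i => V i.castSucc) (fun i => hV _)
      rw [choquet] at this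
      exact this
    rw [Fin.sum_univ_castSucc (f := fun i => r i * μ (V i))]
    have := hBC
    rw [hA]
    linarith [hih, hBC]

end FubiniAux

open Classical in
/-- Fubini for a simple valuation: for a Scott-open `U ⊆ D × E`, a simple
valuation `ν = Σᵢ rᵢ δ_{xᵢ}` on `D` and any subprobability valuation `ξ` on
`E`, the two iterated Choquet integrals of the characteristic function of `U`
agree, and both equal `Σᵢ rᵢ ∫_{y∈E} χ_U(xᵢ,y) dξ`. -/
theorem fubini_simple_valuation {D E : Type*} [PartialOrder D] [PartialOrder E]
    (hD : IsDcpo D) (hE : IsDcpo E)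
    (U : Set (D × E)) (hU : ScottOpen U)
    (n : ℕ) (x : Fin n → D) (r : Fin n → ℝ)
    (hr : ∀ i, 0 < r i) (hsum : ∑ i, r i ≤ 1)
    (ξ : SVal E) :
    choquet (fun V : Set D => ∑ i, r i * (if x i ∈ V then (1:ℝ) else 0))
        (fun a => choquet ξ.v (fun b => if (a, b) ∈ U then (1:ℝ) else 0)) =
      choquet ξ.v
        (fun b => choquet (fun V : Set D => ∑ i, r i * (if x i ∈ V then (1:ℝ) else 0))
          (fun a => if (a, b) ∈ U then (1:ℝ) else 0)) ∧
    choquet (fun V : Set D => ∑ i, r i * (if x i ∈ V then (1:ℝ) else 0))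
        (fun a => choquet ξ.v (fun b => if (a, b) ∈ U then (1:ℝ) else 0)) =
      ∑ i, r i * choquet ξ.v (fun b => if (x i, b) ∈ U then (1:ℝ) else 0) := by
  have hν0 : (fun V : Set D => ∑ i, r i * (if x i ∈ V then (1:ℝ) else 0)) ∅ = 0 := by simp
  -- the inner integral over E is the valuation of the slice
  have hinner : ∀ a : D, choquet ξ.v (fun b => if (a, b) ∈ U then (1:ℝ) else 0)
      = ξ.v {b | (a, b) ∈ U} := fun a =>
    choquet_indicator ξ.v ξ.strict (fun b => (a, b) ∈ U)
  have hslice : ∀ i, ScottOpen {b : E | (x i, b) ∈ U} := fun i => scottOpen_slice hU (x i)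
  -- LHS computation
  have hLHS : choquet (fun V : Set D => ∑ i, r i * (if x i ∈ V then (1:ℝ) else 0))
      (fun a => choquet ξ.v (fun b => if (a, b) ∈ U then (1:ℝ) else 0))
      = ∑ i, r i * ξ.v {b | (x i, b) ∈ U} := by
    rw [choquet]
    have hcongr : Set.EqOn
        (fun t => ∑ i, r i * (if x i ∈ ((fun a => choquet ξ.v
          (fun b => if (a, b) ∈ U then (1:ℝ) else 0)) ⁻¹' Set.Ioi t) then (1:ℝ) else 0))
        (fun t => ∑ i, r i * (if t < ξ.v {b | (x i, b) ∈ U} then (1:ℝ) else 0))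
        (Set.uIcc (0:ℝ) 1) := by
      intro t _
      apply Finset.sum_congr rfl
      intro i _
      congr 1
      apply if_congr _ rfl rfl
      simp only [Set.mem_preimage, Set.mem_Ioi, hinner (x i)]
    rw [intervalIntegral.integral_congr hcongr]
    rw [intervalIntegral.integral_finset_sum
      (fun i _ => indicator_lt_intervalIntegrable (r i) _ 0 1 (hr i).le)]
    apply Finset.sum_congr rfl
    intro i _
    rw [intervalIntegral.integral_const_mul,
      integral_indicator_lt _ (ξ.nonneg _ (hslice i)) (ξ.le_one _ (hslice i))]
  -- inner integral over D is a simple sum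
  have hinner2 : (fun b => choquet (fun V : Set D => ∑ i, r i * (if x i ∈ V then (1:ℝ) else 0))
      (fun a => if (a, b) ∈ U then (1:ℝ) else 0))
      = fun b => ∑ i, r i * (if b ∈ {y : E | (x i, y) ∈ U} then (1:ℝ) else 0) := by
    funext b
    rw [choquet_indicator _ hν0 (fun a => (a, b) ∈ U)]
    simp only [Set.mem_setOf_eq]
  have hRHS : choquet ξ.v
      (fun b => choquet (fun V : Set D => ∑ i, r i * (if x i ∈ V then (1:ℝ) else 0))
        (fun a => if (a, b) ∈ U then (1:ℝ) else 0))
      = ∑ i, r i * ξ.v {b | (x i, b) ∈ U} := by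
    rw [hinner2]
    exact choquet_simple ξ.v ξ.strict (fun _ _ h1 h2 h3 => ξ.mono h1 h2 h3) ξ.modular
      n r (fun i => (hr i).le) hsum (fun i => {y : E | (x i, y) ∈ U}) hslice
  refine ⟨hLHS.trans hRHS.symm, hLHS.trans ?_⟩
  apply Finset.sum_congr rfl
  intro i _
  rw [hinner (x i)]
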